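/- arXiv:2507.09355 — 2 statements merged into one kernel-verified Lean document; each statement's English description precedes it below -/
import Mathlib

section
/- Let d ≥ 1 and for k = 1, …, d define P_k = {x ∈ [0,1]^d : k−1 ≤ x_1 + ⋯ + x_d ≤ k}, and let Δ = {x ∈ ℝ^d : x_i ≥ 0 for all i, x_1 + ⋯ + x_d ≤ 1} be the standard simplex. Then for every positive integer n, the dilated simplex nΔ is the union, over k = 1, …, d and over z ∈ ℤ^d with all z_i ≥ 0 and z_1 + ⋯ + z_d ≤ n − k, of the translates z + P_k; these translates have pairwise disjoint interiors; and for each k the number of vectors z ∈ ℤ^d with z_i ≥ 0 and z_1 + ⋯ + z_d ≤ n − k equals the binomial coefficient C(n − k + d, d). -/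
open MeasureTheory

lemma natSetFinite (d m : ℕ) : {z : Fin d → ℕ | ∑ i, z i ≤ m}.Finite := by
  apply Set.Finite.subset (Set.Finite.pi (fun i : Fin d => Set.finite_Iic m))
  intro z hz
  simp only [Set.mem_pi, Set.mem_univ, Set.mem_Iic, forall_true_left]
  intro i
  exact le_trans (Finset.single_le_sum (fun j _ => Nat.zero_le _) (Finset.mem_univ i)) hz

lemma sum_split {d : ℕ} (z : Fin (d+1) → ℕ) : ∑ i, z i = z 0 + ∑ i, Fin.tail z i := by
  rw [Fin.sum_univ_succ]; rfl

lemma natCount : ∀ (d m : ℕ), ({z : Fin d → ℕ | ∑ i, z i ≤ m}).ncard = (m + d).choose d := by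
  intro d
  induction d with
  | zero =>
    intro m
    have : {z : Fin 0 → ℕ | ∑ i, z i ≤ m} = Set.univ := by
      ext z; simp
    rw [this, Set.ncard_univ]
    simp [Nat.card_eq_fintype_card]
  | succ d ih =>
    intro m
    induction m with
    | zero =>
      have : {z : Fin (d+1) → ℕ | ∑ i, z i ≤ 0} = {fun _ => 0} := by
        ext z
        simp only [Set.mem_setOf_eq, Nat.le_zero, Finset.sum_eq_zero_iff, Finset.mem_univ,
          forall_true_left, Set.mem_singleton_iff]
        constructor
        · intro h; funext i; exact h i
        · intro h i; rw [h]
      rw [this, Set.ncard_singleton]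
      simp
    | succ m ihm =>
      have hSfin := natSetFinite (d+1) (m+1)
      have hunion : {z : Fin (d+1) → ℕ | ∑ i, z i ≤ m + 1} =
          {z : Fin (d+1) → ℕ | (∑ i, z i ≤ m + 1) ∧ z 0 = 0} ∪
          {z : Fin (d+1) → ℕ | (∑ i, z i ≤ m + 1) ∧ 1 ≤ z 0} := by
        ext z
        simp only [Set.mem_setOf_eq, Set.mem_union]
        constructor
        · intro h
          rcases Nat.eq_zero_or_pos (z 0) with h0 | h0
          · exact Or.inl ⟨h, h0⟩
          · exact Or.inr ⟨h, h0⟩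
        · rintro (⟨h, _⟩ | ⟨h, _⟩) <;> exact h
      have hdisj : Disjoint {z : Fin (d+1) → ℕ | (∑ i, z i ≤ m + 1) ∧ z 0 = 0}
          {z : Fin (d+1) → ℕ | (∑ i, z i ≤ m + 1) ∧ 1 ≤ z 0} := by
        rw [Set.disjoint_iff]
        rintro z ⟨⟨_, h0⟩, ⟨_, h1⟩⟩
        rw [h0] at h1
        exact absurd h1 (by norm_num)
      have hAcard : ({z : Fin (d+1) → ℕ | (∑ i, z i ≤ m + 1) ∧ z 0 = 0}).ncard
          = (m + 1 + d).choose d := by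
        have himg : {z : Fin (d+1) → ℕ | (∑ i, z i ≤ m + 1) ∧ z 0 = 0} =
            (fun t : Fin d → ℕ => Fin.cons 0 t) '' {t | ∑ i, t i ≤ m + 1} := by
          ext z
          simp only [Set.mem_setOf_eq, Set.mem_image]
          constructor
          · rintro ⟨hz, h0⟩
            refine ⟨Fin.tail z, ?_, ?_⟩
            · have hsplit := sum_split z
              clear * - hz hsplit h0
              omega
            · rw [← h0]; exact Fin.cons_self_tail z
          · rintro ⟨t, ht, rfl⟩
            constructor
            · rw [Fin.sum_cons, zero_add]; exact ht
            · simp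
        rw [himg, Set.ncard_image_of_injective _ ?_, ih (m+1)]
        intro t t' h
        funext i
        have := congrFun h i.succ
        simpa using this
      have hBcard : ({z : Fin (d+1) → ℕ | (∑ i, z i ≤ m + 1) ∧ 1 ≤ z 0}).ncard
          = (m + (d+1)).choose (d+1) := by
        have himg : {z : Fin (d+1) → ℕ | (∑ i, z i ≤ m + 1) ∧ 1 ≤ z 0} =
            (fun z : Fin (d+1) → ℕ => Fin.cons (z 0 + 1) (Fin.tail z)) ''
            {z | ∑ i, z i ≤ m} := by
          ext w
          simp only [Set.mem_setOf_eq, Set.mem_image]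
          constructor
          · rintro ⟨hw, h1⟩
            refine ⟨Fin.cons (w 0 - 1) (Fin.tail w), ?_, ?_⟩
            · rw [Fin.sum_cons]
              have hsplit := sum_split w
              clear * - hw h1 hsplit
              omega
            · rw [show Fin.tail (Fin.cons (w 0 - 1) (Fin.tail w) : Fin (d+1) → ℕ)
                  = Fin.tail w from Fin.tail_cons _ _,
                Fin.cons_zero, show w 0 - 1 + 1 = w 0 from Nat.succ_pred_eq_of_pos h1,
                Fin.cons_self_tail]
          · rintro ⟨z, hz, rfl⟩
            constructor
            · rw [Fin.sum_cons]
              have hsplit := sum_split z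
              clear * - hz hsplit
              omega
            · simp
        rw [himg, Set.ncard_image_of_injective _ ?_, ihm]
        intro z z' h
        have h0 := congrFun h 0
        simp only [Fin.cons_zero] at h0
        have ht : Fin.tail z = Fin.tail z' := by
          funext i
          have := congrFun h i.succ
          simpa using this
        funext i
        refine Fin.cases ?_ ?_ i
        · exact Nat.add_right_cancel h0
        · intro j; exact congrFun ht j
      rw [hunion, Set.ncard_union_eq hdisj
        (hSfin.subset (fun z hz => hz.1)) (hSfin.subset (fun z hz => hz.1)),
        hAcard, hBcard]
      rw [show m + 1 + (d + 1) = (m + 1 + d) + 1 by ring, Nat.choose_succ_succ (m + 1 + d) d]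
      congr 2
      clear * - 
      omega

lemma intCount (d m : ℕ) :
    Set.ncard {z : Fin d → ℤ | (∀ i, 0 ≤ z i) ∧ ∑ i, z i ≤ (m : ℤ)} = (m + d).choose d := by
  have himg : {z : Fin d → ℤ | (∀ i, 0 ≤ z i) ∧ ∑ i, z i ≤ (m : ℤ)} =
      (fun (w : Fin d → ℕ) (i : Fin d) => (w i : ℤ)) '' {w | ∑ i, w i ≤ m} := by
    ext z
    simp only [Set.mem_setOf_eq, Set.mem_image]
    constructor
    · rintro ⟨h0, hs⟩
      refine ⟨fun i => (z i).toNat, ?_, ?_⟩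
      · have h1 : ((∑ i, (z i).toNat : ℕ) : ℤ) ≤ (m : ℤ) := by
          push_cast
          calc (∑ i, ((z i).toNat : ℤ)) = ∑ i, z i :=
                Finset.sum_congr rfl (fun i _ => Int.toNat_of_nonneg (h0 i))
            _ ≤ m := hs
        exact_mod_cast h1
      · funext i; exact Int.toNat_of_nonneg (h0 i)
    · rintro ⟨w, hw, rfl⟩
      refine ⟨fun i => Int.ofNat_nonneg _, ?_⟩
      have h1 : ((∑ i, w i : ℕ) : ℤ) ≤ (m : ℤ) := by exact_mod_cast hw
      push_cast at h1
      exact h1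
  rw [himg, Set.ncard_image_of_injective _ ?_, natCount]
  intro w w' h
  funext i
  have h2 := congrFun h i
  simp only at h2
  exact_mod_cast h2

lemma interior_slab_subset {d : ℕ} (hd : 1 ≤ d) (K : ℕ) {w : Fin d → ℝ}
    (hw : w ∈ interior {x ∈ Set.Icc (0 : Fin d → ℝ) 1 |
      ((K : ℕ) : ℝ) ≤ ∑ i, x i ∧ ∑ i, x i ≤ (K : ℕ) + 1}) :
    (∀ i, 0 < w i ∧ w i < 1) ∧ ((K : ℝ) < ∑ i, w i ∧ ∑ i, w i < (K : ℝ) + 1) := by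
  rw [mem_interior_iff_mem_nhds, Metric.mem_nhds_iff] at hw
  obtain ⟨ε, hε, hball⟩ := hw
  have hε2 : (0 : ℝ) ≤ ε / 2 := by linarith
  have htest : ∀ v : Fin d → ℝ, (∀ i, |v i| ≤ ε / 2) →
      (w + v) ∈ {x ∈ Set.Icc (0 : Fin d → ℝ) 1 |
        ((K : ℕ) : ℝ) ≤ ∑ i, x i ∧ ∑ i, x i ≤ (K : ℕ) + 1} := by
    intro v hv
    apply hball
    rw [Metric.mem_ball]
    have : dist (w + v) w ≤ ε / 2 := by
      rw [dist_pi_le_iff hε2]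
      intro i
      simp only [Pi.add_apply, Real.dist_eq, add_sub_cancel_left]
      exact hv i
    linarith
  constructor
  · intro i
    constructor
    · have h1 := htest (fun j => if j = i then -(ε/2) else 0) ?_
      · obtain ⟨⟨hl, _⟩, _⟩ := h1
        have := hl i
        simp only [Pi.add_apply, Pi.zero_apply, if_pos rfl, if_true] at this
        linarith
      · intro j; by_cases h : j = i <;> simp [h, abs_of_nonneg, hε2, abs_of_nonpos]
    · have h1 := htest (fun j => if j = i then ε/2 else 0) ?_
      · obtain ⟨⟨_, hu⟩, _⟩ := h1
        have := hu i
        simp only [Pi.add_apply, Pi.one_apply, if_pos rfl, if_true] at this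
        linarith
      · intro j; by_cases h : j = i <;> simp [h, abs_of_nonneg, hε2]
  · have hd1 : (1 : ℝ) ≤ d := by exact_mod_cast hd
    constructor
    · have h1 := htest (fun _ => -(ε/2)) (fun j => by simp [abs_of_nonpos, hε2])
      obtain ⟨_, hl, _⟩ := h1
      simp only [Pi.add_apply] at hl
      rw [Finset.sum_add_distrib, Finset.sum_const, Finset.card_univ, Fintype.card_fin,
        nsmul_eq_mul] at hl
      nlinarith
    · have h1 := htest (fun _ => ε/2) (fun j => by simp [abs_of_nonneg, hε2])
      obtain ⟨_, _, hu⟩ := h1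
      simp only [Pi.add_apply] at hu
      rw [Finset.sum_add_distrib, Finset.sum_const, Finset.card_univ, Fintype.card_fin,
        nsmul_eq_mul] at hu
      nlinarith

lemma interior_translate {d : ℕ} (c : Fin d → ℝ) (P : Set (Fin d → ℝ)) :
    interior ((fun y : Fin d → ℝ => c + y) '' P) = (fun y : Fin d → ℝ => c + y) '' interior P := by
  have : (fun y : Fin d → ℝ => c + y) = ⇑(Homeomorph.addLeft c) := rfl
  rw [this, Homeomorph.image_interior]

lemma exists_decomp {d n : ℕ} (hd : 1 ≤ d) (hn : 0 < n) {x : Fin d → ℝ}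
    (h0 : ∀ i, 0 ≤ x i) (hs : ∑ i, x i ≤ (n : ℝ)) :
    ∃ (k : Fin d) (z : Fin d → ℤ), (∀ i, 0 ≤ z i) ∧ (∑ i, z i ≤ (n : ℤ) - ((k : ℕ) + 1)) ∧
      ∃ y : Fin d → ℝ, ((y ∈ Set.Icc (0 : Fin d → ℝ) 1) ∧
          ((k : ℕ) : ℝ) ≤ ∑ i, y i ∧ ∑ i, y i ≤ ((k : ℕ) : ℝ) + 1) ∧
        (fun i => ((z i : ℝ))) + y = x := by
  have hne : Nonempty (Fin d) := ⟨⟨0, hd⟩⟩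
  set s : ℝ := ∑ i, Int.fract (x i) with hsdef
  have hs0 : 0 ≤ s := Finset.sum_nonneg (fun i _ => Int.fract_nonneg _)
  have hsd : s < d := by
    calc s < ∑ _i : Fin d, (1 : ℝ) :=
          Finset.sum_lt_sum_of_nonempty Finset.univ_nonempty (fun i _ => Int.fract_lt_one _)
      _ = d := by simp
  have hfloorsum : (↑(∑ i, ⌊x i⌋) : ℝ) = ∑ i, x i - s := by
    push_cast
    rw [hsdef, ← Finset.sum_sub_distrib]
    apply Finset.sum_congr rfl
    intro i _
    rw [Int.self_sub_fract]
  rcases lt_or_eq_of_le hs0 with hpos | hzero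
  · -- s > 0 case
    have hc0 : 1 ≤ ⌈s⌉ := by
      have := Int.ceil_pos.mpr hpos
      omega
    have hcd : ⌈s⌉ ≤ (d : ℤ) := Int.ceil_le.mpr (by exact_mod_cast hsd.le)
    refine ⟨⟨(⌈s⌉ - 1).toNat, by omega⟩, fun i => ⌊x i⌋, fun i => Int.floor_nonneg.mpr (h0 i),
      ?_, fun i => Int.fract (x i), ⟨?_, ?_, ?_⟩, ?_⟩
    · have hk : ((((⌈s⌉ - 1).toNat : ℕ) : ℤ)) = ⌈s⌉ - 1 := by omega
      simp only [hk]
      have key : ((∑ i, ⌊x i⌋ : ℤ) : ℝ) + (⌈s⌉ : ℝ) < (n : ℝ) + 1 := by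
        have h1 : (⌈s⌉ : ℝ) < s + 1 := Int.ceil_lt_add_one s
        rw [hfloorsum]
        linarith
      have key2 : (∑ i, ⌊x i⌋) + ⌈s⌉ < (n : ℤ) + 1 := by exact_mod_cast key
      omega
    · rw [Set.mem_Icc]
      constructor
      · intro i; exact Int.fract_nonneg _
      · intro i; exact (Int.fract_lt_one _).le
    · have hk : ((((⌈s⌉ - 1).toNat : ℕ) : ℤ)) = ⌈s⌉ - 1 := by omega
      have h1 : ((⌈s⌉ : ℝ)) - 1 < s := by
        have := Int.ceil_lt_add_one s
        linarith
      have h2 : ((((⌈s⌉ - 1).toNat : ℕ) : ℝ)) = (⌈s⌉ : ℝ) - 1 := by exact_mod_cast hk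
      rw [h2]
      linarith
    · have hk : ((((⌈s⌉ - 1).toNat : ℕ) : ℤ)) = ⌈s⌉ - 1 := by omega
      have h2 : ((((⌈s⌉ - 1).toNat : ℕ) : ℝ)) = (⌈s⌉ : ℝ) - 1 := by exact_mod_cast hk
      rw [h2]
      have := Int.le_ceil s
      linarith
    · funext i
      simp only [Pi.add_apply]
      rw [Int.fract]
      ring
  · -- s = 0 case : all fract are 0
    have hfr : ∀ i, Int.fract (x i) = 0 := by
      intro i
      have := (Finset.sum_eq_zero_iff_of_nonneg (fun j _ => Int.fract_nonneg (x j))).mp hzero.symm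
      exact this i (Finset.mem_univ i)
    have hxz : ∀ i, x i = ((⌊x i⌋ : ℤ) : ℝ) := by
      intro i
      have := hfr i
      rw [Int.fract] at this
      linarith
    have hsz : (∑ i, ⌊x i⌋) ≤ (n : ℤ) := by
      have : ((∑ i, ⌊x i⌋ : ℤ) : ℝ) ≤ (n : ℝ) := by
        rw [hfloorsum, ← hzero]
        simpa using hs
      exact_mod_cast this
    have hk0 : (((⟨0, hd⟩ : Fin d) : ℕ) : ℤ) = 0 := rfl
    by_cases hle : (∑ i, ⌊x i⌋) ≤ (n : ℤ) - 1
    · refine ⟨⟨0, hd⟩, fun i => ⌊x i⌋, fun i => Int.floor_nonneg.mpr (h0 i), ?_,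
        0, ⟨?_, ?_, ?_⟩, ?_⟩
      · rw [hk0]
        have hbeta : ∑ i, (fun i => ⌊x i⌋) i = ∑ i, ⌊x i⌋ := rfl
        rw [hbeta]
        omega
      · rw [Set.mem_Icc]; exact ⟨le_refl _, fun i => by norm_num⟩
      · simp
      · simp
      · funext i
        simp only [Pi.add_apply, Pi.zero_apply, add_zero]
        exact (hxz i).symm
    · have hsum_n : (∑ i, ⌊x i⌋) = (n : ℤ) := by omega
      have hex : ∃ i0, 1 ≤ ⌊x i0⌋ := by
        by_contra hcon
        push_neg at hcon
        have : (∑ i, ⌊x i⌋) ≤ 0 := Finset.sum_nonpos (fun i _ => by have := hcon i; omega)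
        omega
      obtain ⟨i0, hi0⟩ := hex
      refine ⟨⟨0, hd⟩, fun i => ⌊x i⌋ - (if i = i0 then 1 else 0), ?_, ?_,
        fun i => if i = i0 then (1 : ℝ) else 0, ⟨?_, ?_, ?_⟩, ?_⟩
      · intro i
        by_cases h : i = i0
        · subst h; simp only [if_pos rfl]; omega
        · simp only [if_neg h]
          have := Int.floor_nonneg.mpr (h0 i)
          omega
      · rw [hk0]
        have hbeta : ∑ i, (fun i => ⌊x i⌋ - (if i = i0 then 1 else 0)) i
            = ∑ i, (⌊x i⌋ - (if i = i0 then 1 else 0)) := rfl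
        rw [hbeta, Finset.sum_sub_distrib, Finset.sum_ite_eq' Finset.univ i0 (fun _ => (1:ℤ))]
        simp only [Finset.mem_univ, if_true]
        omega
      · rw [Set.mem_Icc]
        constructor
        · intro i; by_cases h : i = i0 <;> simp [h]
        · intro i; by_cases h : i = i0 <;> simp [h]
      · rw [Finset.sum_ite_eq' Finset.univ i0 (fun _ => (1:ℝ))]
        simp
      · rw [Finset.sum_ite_eq' Finset.univ i0 (fun _ => (1:ℝ))]
        simp
      · funext i
        simp only [Pi.add_apply]
        by_cases h : i = i0
        · subst h
          simp only [if_pos rfl]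
          push_cast
          rw [← hxz i]
          ring
        · simp only [if_neg h]
          push_cast
          rw [← hxz i]
          ring

/-- Partition of the dilated standard simplex `nΔ` into integer translates of the slabs
`P_k = {x ∈ [0,1]^d : k−1 ≤ ∑ x_i ≤ k}`, together with the count of translates of each
slab.  Here `k : Fin d` represents the layer `k+1 ∈ {1, …, d}`. -/
theorem dilated_simplex_partition (d : ℕ) (hd : 1 ≤ d)
    (P : Fin d → Set (Fin d → ℝ))
    (hP : ∀ k : Fin d, P k =
      {x ∈ Set.Icc (0 : Fin d → ℝ) 1 |
        ((k : ℕ) : ℝ) ≤ ∑ i, x i ∧ ∑ i, x i ≤ (k : ℕ) + 1})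
    (n : ℕ) (hn : 0 < n) :
    ({x : Fin d → ℝ | (∀ i, 0 ≤ x i) ∧ ∑ i, x i ≤ (n : ℝ)} =
        ⋃ k : Fin d, ⋃ z ∈ {z : Fin d → ℤ | (∀ i, 0 ≤ z i) ∧ ∑ i, z i ≤ (n : ℤ) - ((k : ℕ) + 1)},
          (fun y : Fin d → ℝ => (fun i => (z i : ℝ)) + y) '' P k) ∧
    (∀ (k k' : Fin d) (z z' : Fin d → ℤ),
      ((∀ i, 0 ≤ z i) ∧ ∑ i, z i ≤ (n : ℤ) - ((k : ℕ) + 1)) →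
      ((∀ i, 0 ≤ z' i) ∧ ∑ i, z' i ≤ (n : ℤ) - ((k' : ℕ) + 1)) →
      (k, z) ≠ (k', z') →
      interior ((fun y : Fin d → ℝ => (fun i => (z i : ℝ)) + y) '' P k) ∩
        interior ((fun y : Fin d → ℝ => (fun i => (z' i : ℝ)) + y) '' P k') = ∅) ∧
    (∀ k : Fin d,
      Set.ncard {z : Fin d → ℤ | (∀ i, 0 ≤ z i) ∧ ∑ i, z i ≤ (n : ℤ) - ((k : ℕ) + 1)} =
        Nat.choose (n + d - ((k : ℕ) + 1)) d) := by
  refine ⟨?_, ?_, ?_⟩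
  · -- part 1 : union
    ext x
    simp only [Set.mem_setOf_eq, Set.mem_iUnion, Set.mem_image, exists_prop]
    constructor
    · rintro ⟨h0, hsx⟩
      obtain ⟨k, z, hz0, hzs, y, hy, hxy⟩ := exists_decomp hd hn h0 hsx
      refine ⟨k, z, ⟨hz0, hzs⟩, y, ?_, hxy⟩
      rw [hP k]
      exact ⟨hy.1, hy.2.1, hy.2.2⟩
    · rintro ⟨k, z, ⟨hz0, hzs⟩, y, hy, rfl⟩
      rw [hP k] at hy
      obtain ⟨hyIcc, hyl, hyu⟩ := hy
      rw [Set.mem_Icc] at hyIcc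
      constructor
      · intro i
        have h1 : (0 : ℝ) ≤ (z i : ℝ) := by exact_mod_cast hz0 i
        have h2 : (0 : ℝ) ≤ y i := hyIcc.1 i
        simp only [Pi.add_apply]
        linarith
      · have hsum : ∑ i, ((fun i => ((z i : ℝ))) + y) i = (∑ i, (z i : ℝ)) + ∑ i, y i := by
          simp only [Pi.add_apply]
          rw [Finset.sum_add_distrib]
        rw [hsum]
        have hcz : (∑ i, (z i : ℝ)) ≤ (n : ℝ) - (((k : ℕ) : ℝ) + 1) := by
          have : ((∑ i, z i : ℤ) : ℝ) ≤ (((n : ℤ) - ((k : ℕ) + 1) : ℤ) : ℝ) := by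
            exact_mod_cast hzs
          push_cast at this
          push_cast
          linarith
        linarith
  · -- part 2 : disjoint interiors
    intro k k' z z' hzk hzk' hne
    rw [Set.eq_empty_iff_forall_notMem]
    rintro w ⟨hw1, hw2⟩
    rw [interior_translate] at hw1 hw2
    obtain ⟨u, hu, huw⟩ := hw1
    obtain ⟨u', hu', huw'⟩ := hw2
    rw [hP k] at hu
    rw [hP k'] at hu'
    obtain ⟨hucoord, husum⟩ := interior_slab_subset hd (k : ℕ) hu
    obtain ⟨hucoord', husum'⟩ := interior_slab_subset hd (k' : ℕ) hu'
    have hzz : z = z' := by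
      funext i
      have h1 : (z i : ℝ) < w i := by
        have := (hucoord i).1
        have hw : w i = (z i : ℝ) + u i := by rw [← huw]; rfl
        linarith
      have h2 : w i < (z i : ℝ) + 1 := by
        have := (hucoord i).2
        have hw : w i = (z i : ℝ) + u i := by rw [← huw]; rfl
        linarith
      have h1' : (z' i : ℝ) < w i := by
        have := (hucoord' i).1
        have hw : w i = (z' i : ℝ) + u' i := by rw [← huw']; rfl
        linarith
      have h2' : w i < (z' i : ℝ) + 1 := by
        have := (hucoord' i).2
        have hw : w i = (z' i : ℝ) + u' i := by rw [← huw']; rfl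
        linarith
      have e1 : ⌊w i⌋ = z i := Int.floor_eq_iff.mpr ⟨h1.le, by push_cast; linarith⟩
      have e2 : ⌊w i⌋ = z' i := Int.floor_eq_iff.mpr ⟨h1'.le, by push_cast; linarith⟩
      rw [← e1, ← e2]
    have huu : u = u' := by
      have : (fun i => ((z i : ℝ))) + u = (fun i => ((z' i : ℝ))) + u' := by
        have h := huw.trans huw'.symm
        simpa using h
      rw [← hzz] at this
      exact add_left_cancel this
    have hkk : k = k' := by
      have e1 : ⌊∑ i, u i⌋ = ((k : ℕ) : ℤ) :=
        Int.floor_eq_iff.mpr ⟨by push_cast; exact husum.1.le, by push_cast; exact husum.2⟩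
      have e2 : ⌊∑ i, u i⌋ = ((k' : ℕ) : ℤ) := by
        rw [huu]
        exact Int.floor_eq_iff.mpr ⟨by push_cast; exact husum'.1.le, by push_cast; exact husum'.2⟩
      have : ((k : ℕ) : ℤ) = ((k' : ℕ) : ℤ) := by rw [← e1, ← e2]
      have hv : (k : ℕ) = (k' : ℕ) := by exact_mod_cast this
      exact Fin.ext hv
    exact hne (by rw [hkk, hzz])
  · -- part 3 : counting
    intro k
    by_cases hcase : (k : ℕ) + 1 ≤ n
    · have hm : (n : ℤ) - ((k : ℕ) + 1) = ((n - ((k : ℕ) + 1) : ℕ) : ℤ) := by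
        push_cast
        omega
      have hset : {z : Fin d → ℤ | (∀ i, 0 ≤ z i) ∧ ∑ i, z i ≤ (n : ℤ) - ((k : ℕ) + 1)} =
          {z : Fin d → ℤ | (∀ i, 0 ≤ z i) ∧ ∑ i, z i ≤ ((n - ((k : ℕ) + 1) : ℕ) : ℤ)} := by
        ext z
        rw [Set.mem_setOf_eq, Set.mem_setOf_eq, hm]
      rw [hset, intCount]
      congr 1
      omega
    · have hset : {z : Fin d → ℤ | (∀ i, 0 ≤ z i) ∧ ∑ i, z i ≤ (n : ℤ) - ((k : ℕ) + 1)} = ∅ := by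
        rw [Set.eq_empty_iff_forall_notMem]
        rintro z ⟨h0, hsz⟩
        have h1 : (0 : ℤ) ≤ ∑ i, z i := Finset.sum_nonneg (fun i _ => h0 i)
        have h2 : (n : ℤ) - ((k : ℕ) + 1) < 0 := by
          push_cast
          omega
        linarith
      rw [hset, Set.ncard_empty]
      have hlt : n + d - ((k : ℕ) + 1) < d := by
        have := k.isLt
        omega
      exact (Nat.choose_eq_zero_of_lt hlt).symm
end

section
/- Let d ≥ 3, regard ℝ^{d+1} = ℝ^d × ℝ, let P = {(x, 0) ∈ ℝ^{d+1} : x ∈ [0,1]^d, 1 ≤ x_1 + ⋯ + x_d ≤ d − 1}, and let e = {(0, …, 0, t) : t ∈ [0,1]} be the segment from the origin to the last standard basis vector. Then for almost every y ∈ [0,1]^{d+1}, |(P + y) ∩ ℤ^{d+1}| = 0 and |(e + y) ∩ ℤ^{d+1}| = 0, yet the set {y ∈ [0,1]^{d+1} : |((P ⊕ e) + y) ∩ ℤ^{d+1}| = 1} has positive Lebesgue measure, where P ⊕ e is the Minkowski sum. In particular, the planar identity X_{P⊕Q} = X_P + X_Q + const fails in dimension d + 1. -/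
open MeasureTheory Pointwise

noncomputable def latticeCount (d : ℕ) (C : Set (Fin d → ℝ)) (x : Fin d → ℝ) : ℕ :=
  Set.ncard {z : Fin d → ℤ | (fun i => (z i : ℝ)) - x ∈ C}

lemma key_one (a : ℤ) (b : ℝ) (hb : b ∈ Set.Ioo (0.4:ℝ) 0.6)
    (h : (a:ℝ) - b ∈ Set.Icc (0:ℝ) 1) : a = 1 := by
  obtain ⟨h1, h2⟩ := h
  obtain ⟨hb1, hb2⟩ := hb
  have ha0 : (0:ℝ) < a := by linarith
  have ha2 : (a:ℝ) < 2 := by linarith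
  have h0 : 0 < a := by exact_mod_cast ha0
  have h2' : a < 2 := by exact_mod_cast ha2
  omega

/-- Counterexample to the Minkowski-sum identity in dimension `d+1 ≥ 4`: with
`P = {(x,0) : x ∈ [0,1]^d, 1 ≤ ∑ x_i ≤ d−1}` and `e` the segment from the origin to the
last basis vector, both `X_P = 0` and `X_e = 0` almost surely, yet `X_{P ⊕ e} = 1` with
positive probability. -/
theorem minkowski_sum_counterexample (d : ℕ) (hd : 3 ≤ d)
    (P e : Set (Fin (d + 1) → ℝ))
    (hP : P = {y : Fin (d + 1) → ℝ |
      (∀ i : Fin d, y i.castSucc ∈ Set.Icc (0 : ℝ) 1) ∧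
      y (Fin.last d) = 0 ∧
      1 ≤ ∑ i : Fin d, y i.castSucc ∧ ∑ i : Fin d, y i.castSucc ≤ (d : ℝ) - 1})
    (he : e = {y : Fin (d + 1) → ℝ |
      (∀ i : Fin d, y i.castSucc = 0) ∧ y (Fin.last d) ∈ Set.Icc (0 : ℝ) 1}) :
    (∀ᵐ y ∂(volume.restrict (Set.Icc (0 : Fin (d + 1) → ℝ) 1)),
      latticeCount (d + 1) P y = 0 ∧ latticeCount (d + 1) e y = 0) ∧
    0 < volume {y ∈ Set.Icc (0 : Fin (d + 1) → ℝ) 1 |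
      latticeCount (d + 1) (P + e) y = 1} := by
  have hd1 : (3:ℝ) ≤ (d:ℝ) := by exact_mod_cast hd
  set i0 : Fin d := ⟨0, by omega⟩ with hi0def
  have hconst : ∀ c : ℝ, ∑ _i : Fin d, c = (d:ℝ) * c := by
    intro c
    rw [Finset.sum_const, Finset.card_univ, Fintype.card_fin, nsmul_eq_mul]
  constructor
  · have h1 : ∀ᵐ (y : Fin (d+1) → ℝ) ∂volume, ∀ z : ℤ, y (Fin.last d) ≠ (z : ℝ) := by
      rw [ae_all_iff]
      intro z
      exact Measure.ae_eval_ne (fun _ : Fin (d+1) => (volume : Measure ℝ)) (Fin.last d) (z : ℝ)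
    have h2 : ∀ᵐ (y : Fin (d+1) → ℝ) ∂volume, ∀ z : ℤ, y i0.castSucc ≠ (z : ℝ) := by
      rw [ae_all_iff]
      intro z
      exact Measure.ae_eval_ne (fun _ : Fin (d+1) => (volume : Measure ℝ)) i0.castSucc (z : ℝ)
    filter_upwards [ae_restrict_of_ae h1, ae_restrict_of_ae h2] with y hy1 hy2
    constructor
    · unfold latticeCount
      convert Set.ncard_empty (Fin (d+1) → ℤ)
      rw [Set.eq_empty_iff_forall_notMem]
      intro z hz
      rw [Set.mem_setOf_eq, hP, Set.mem_setOf_eq] at hz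
      obtain ⟨-, hz2, -⟩ := hz
      have h00 : (z (Fin.last d) : ℝ) - y (Fin.last d) = 0 := hz2
      exact hy1 (z (Fin.last d)) (by linarith)
    · unfold latticeCount
      convert Set.ncard_empty (Fin (d+1) → ℤ)
      rw [Set.eq_empty_iff_forall_notMem]
      intro z hz
      rw [Set.mem_setOf_eq, he, Set.mem_setOf_eq] at hz
      obtain ⟨hz1, -⟩ := hz
      have h00 : (z i0.castSucc : ℝ) - y i0.castSucc = 0 := hz1 i0
      exact hy2 (z i0.castSucc) (by linarith)
  · have hPe : P + e = {y : Fin (d + 1) → ℝ |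
        (∀ i : Fin d, y i.castSucc ∈ Set.Icc (0 : ℝ) 1) ∧
        y (Fin.last d) ∈ Set.Icc (0 : ℝ) 1 ∧
        1 ≤ ∑ i : Fin d, y i.castSucc ∧ ∑ i : Fin d, y i.castSucc ≤ (d : ℝ) - 1} := by
      ext w
      rw [Set.mem_add]
      constructor
      · rintro ⟨p, hp, q, hq, rfl⟩
        rw [hP, Set.mem_setOf_eq] at hp
        rw [he, Set.mem_setOf_eq] at hq
        obtain ⟨hp1, hp2, hp3, hp4⟩ := hp
        obtain ⟨hq1, hq2⟩ := hq
        have hcoord : ∀ i : Fin d, (p + q) i.castSucc = p i.castSucc := by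
          intro i; simp [Pi.add_apply, hq1 i]
        refine ⟨fun i => by rw [hcoord i]; exact hp1 i, ?_, ?_, ?_⟩
        · simpa [Pi.add_apply, hp2] using hq2
        · calc (1:ℝ) ≤ ∑ i : Fin d, p i.castSucc := hp3
            _ = ∑ i : Fin d, (p + q) i.castSucc :=
              Finset.sum_congr rfl fun i _ => (hcoord i).symm
        · calc ∑ i : Fin d, (p + q) i.castSucc = ∑ i : Fin d, p i.castSucc :=
              Finset.sum_congr rfl fun i _ => hcoord i
            _ ≤ (d:ℝ) - 1 := hp4
      · rintro ⟨hw1, hw2, hw3, hw4⟩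
        refine ⟨Function.update w (Fin.last d) 0, ?_,
          fun j => if j = Fin.last d then w (Fin.last d) else 0, ?_, ?_⟩
        · rw [hP, Set.mem_setOf_eq]
          have hupd : ∀ i : Fin d, Function.update w (Fin.last d) 0 i.castSucc = w i.castSucc :=
            fun i => Function.update_of_ne (Fin.castSucc_lt_last i).ne _ _
          refine ⟨fun i => by rw [hupd i]; exact hw1 i, Function.update_self _ _ _, ?_, ?_⟩
          · calc (1:ℝ) ≤ ∑ i : Fin d, w i.castSucc := hw3
              _ = _ := Finset.sum_congr rfl fun i _ => (hupd i).symm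
          · calc ∑ i : Fin d, Function.update w (Fin.last d) 0 i.castSucc
                = ∑ i : Fin d, w i.castSucc := Finset.sum_congr rfl fun i _ => hupd i
              _ ≤ (d:ℝ) - 1 := hw4
        · rw [he, Set.mem_setOf_eq]
          exact ⟨fun i => by simp [(Fin.castSucc_lt_last i).ne], by simp [hw2]⟩
        · funext j
          refine Fin.lastCases ?_ ?_ j
          · simp
          · intro i
            simp [Function.update_of_ne (Fin.castSucc_lt_last i).ne, (Fin.castSucc_lt_last i).ne]
    set B : Set (Fin (d+1) → ℝ) := Set.pi Set.univ (fun _ => Set.Ioo (0.4:ℝ) 0.6) with hB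
    have hsub : B ⊆ {y ∈ Set.Icc (0 : Fin (d + 1) → ℝ) 1 |
        latticeCount (d + 1) (P + e) y = 1} := by
      intro y hy
      have hyj : ∀ j, y j ∈ Set.Ioo (0.4:ℝ) 0.6 := fun j => hy j (Set.mem_univ j)
      refine ⟨⟨fun j => le_of_lt (by linarith [(hyj j).1] : (0:ℝ) < y j),
        fun j => le_of_lt (by linarith [(hyj j).2] : y j < 1)⟩, ?_⟩
      unfold latticeCount
      have hset : {z : Fin (d+1) → ℤ | (fun i => (z i : ℝ)) - y ∈ P + e}
          = {fun _ => 1} := by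
        ext z
        rw [Set.mem_setOf_eq, hPe, Set.mem_setOf_eq, Set.mem_singleton_iff]
        constructor
        · rintro ⟨h1, h2, -⟩
          funext j
          refine Fin.lastCases ?_ ?_ j
          · exact key_one _ _ (hyj _) h2
          · intro i; exact key_one _ _ (hyj _) (h1 i)
        · rintro rfl
          have hsum : ∑ i : Fin d, ((1:ℝ) - y i.castSucc)
              = (d:ℝ) - ∑ i : Fin d, y i.castSucc := by
            rw [Finset.sum_sub_distrib, hconst, mul_one]
          have hne : (Finset.univ : Finset (Fin d)).Nonempty := ⟨i0, Finset.mem_univ _⟩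
          have hup : ∑ i : Fin d, y i.castSucc < (d:ℝ) * 0.6 := by
            rw [← hconst]
            exact Finset.sum_lt_sum_of_nonempty hne fun i _ => (hyj _).2
          have hlo : (d:ℝ) * 0.4 < ∑ i : Fin d, y i.castSucc := by
            rw [← hconst]
            exact Finset.sum_lt_sum_of_nonempty hne fun i _ => (hyj _).1
          have hsum' : ∑ i : Fin d, (((fun _ : Fin (d+1) => ((1:ℤ):ℝ)) - y) i.castSucc)
              = (d:ℝ) - ∑ i : Fin d, y i.castSucc := by
            rw [← hsum]
            exact Finset.sum_congr rfl fun i _ => by simp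
          refine ⟨fun i => ?_, ?_, ?_, ?_⟩
          · have := hyj i.castSucc
            simp only [Pi.sub_apply, Int.cast_one, Set.mem_Icc]
            constructor <;> [linarith [this.2]; linarith [this.1]]
          · have := hyj (Fin.last d)
            simp only [Pi.sub_apply, Int.cast_one, Set.mem_Icc]
            constructor <;> [linarith [this.2]; linarith [this.1]]
          · rw [show (fun i : Fin (d+1) => (((fun _ : Fin (d+1) => (1:ℤ)) i : ℤ) : ℝ))
                = (fun _ : Fin (d+1) => ((1:ℤ):ℝ)) from rfl, hsum']
            linarith
          · rw [show (fun i : Fin (d+1) => (((fun _ : Fin (d+1) => (1:ℤ)) i : ℤ) : ℝ))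
                = (fun _ : Fin (d+1) => ((1:ℤ):ℝ)) from rfl, hsum']
            linarith
      rw [hset, Set.ncard_singleton]
    have hvol : (0:ENNReal) < volume B := by
      rw [hB, volume_pi_pi]
      simp only [Real.volume_Ioo]
      rw [Finset.prod_const]
      exact ENNReal.pow_pos (ENNReal.ofReal_pos.mpr (by norm_num)) _
    exact lt_of_lt_of_le hvol (measure_mono hsub)
end
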